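/- Let 0 ≤ d ≤ n be integers, let q¹, …, q^{n−d} be linearly independent vectors in ℤⁿ, and let S ⊆ ℤ₊ⁿ satisfy ⟨q^j, κ⟩ ≥ 0 for all κ ∈ S and all j. Then there exist vectors q̃¹, …, q̃ⁿ ∈ ℤⁿ such that: (1) span{q̃¹,…,q̃^k} = span{q¹,…,q^k} for k = 1,…,n−d (with suitable extension {q^{n−d+1},…,q^n} chosen among the standard basis vectors making q¹,…,qⁿ linearly independent, and span{q̃¹,…,q̃^k} = span{q¹,…,q^k} for all k ≤ n); (2) ⟨q̃^j, κ⟩ ≥ 0 for all κ ∈ S and j = 1,…,n; (3) the convex hull of {0, q̃¹, …, q̃ⁿ} contains no lattice points other than {0, q̃¹, …, q̃ⁿ}; and (4) |det(q̃¹, …, q̃ⁿ)| = 1. -/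

import Mathlib

/-- An integer vector viewed in `ℝⁿ`. -/
noncomputable def zToR {n : ℕ} (v : Fin n → ℤ) : Fin n → ℝ := fun l => (v l : ℝ)

namespace IntegerLemmaAux
open Finset

/-- integer vectors into rational vectors -/
noncomputable def iQ (n : ℕ) : (Fin n → ℤ) →ₗ[ℤ] (Fin n → ℚ) where
  toFun v := fun l => (v l : ℚ)
  map_add' v w := by funext l; push_cast; simp
  map_smul' c v := by funext l; push_cast; simp

lemma iQ_apply {n : ℕ} (v : Fin n → ℤ) (l : Fin n) : iQ n v l = (v l : ℚ) := rfl

lemma iQ_inj {n : ℕ} : Function.Injective (iQ n) := by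
  intro v w h
  funext l
  have := congrFun h l
  simpa [iQ_apply] using this

noncomputable def stdZ (n : ℕ) (i : Fin n) : Fin n → ℤ := fun l => if l = i then 1 else 0

lemma iQ_stdZ {n : ℕ} (i : Fin n) : iQ n (stdZ n i) = Pi.basisFun ℚ (Fin n) i := by
  funext l
  simp [iQ_apply, stdZ, Pi.basisFun_apply, Pi.single_apply]

noncomputable def qR (n : ℕ) : (Fin n → ℚ) →ₗ[ℚ] (Fin n → ℝ) where
  toFun v := fun l => (v l : ℝ)
  map_add' v w := by funext l; push_cast; simp
  map_smul' c v := by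
    funext l
    simp only [Pi.smul_apply, RingHom.id_apply, Rat.smul_def]
    push_cast
    ring

lemma qR_iQ {n : ℕ} (v : Fin n → ℤ) : qR n (iQ n v) = zToR v := by
  funext l
  show (((v l : ℚ)) : ℝ) = (v l : ℝ)
  push_cast
  rfl

lemma li_rat {n m : ℕ} {v : Fin m → Fin n → ℤ} (hv : LinearIndependent ℤ v) :
    LinearIndependent ℚ fun j => iQ n (v j) := by
  have h1 : LinearIndependent ℤ fun j => iQ n (v j) :=
    hv.map' (iQ n) (LinearMap.ker_eq_bot.2 iQ_inj)
  exact (LinearIndependent.iff_fractionRing ℤ ℚ).1 h1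

lemma li_int {n m : ℕ} {v : Fin m → Fin n → ℤ} (hv : LinearIndependent ℚ fun j => iQ n (v j)) :
    LinearIndependent ℤ v := by
  have h1 : LinearIndependent ℤ fun j => iQ n (v j) :=
    (LinearIndependent.iff_fractionRing ℤ ℚ).2 hv
  exact LinearIndependent.of_comp (iQ n) h1

lemma exists_ext (n d : ℕ) (q : Fin (n - d) → Fin n → ℤ)
    (hq : LinearIndependent ℚ fun j => iQ n (q j)) :
    ∃ ext : Fin n → Fin n → ℤ,
      (∀ (j : Fin n) (hj : (j : ℕ) < n - d), ext j = q ⟨(j : ℕ), hj⟩) ∧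
      (∀ j : Fin n, n - d ≤ (j : ℕ) → ∃ i : Fin n, ext j = stdZ n i) ∧
      LinearIndependent ℚ fun j => iQ n (ext j) := by
  suffices h : ∀ m, n - d ≤ m → m ≤ n → ∃ f : Fin m → Fin n → ℤ,
      (∀ (j : Fin m) (hj : (j : ℕ) < n - d), f j = q ⟨(j : ℕ), hj⟩) ∧
      (∀ j : Fin m, n - d ≤ (j : ℕ) → ∃ i : Fin n, f j = stdZ n i) ∧
      LinearIndependent ℚ fun j => iQ n (f j) by
    exact h n (Nat.sub_le n d) le_rfl
  intro m hm1
  induction m, hm1 using Nat.le_induction with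
  | base =>
    intro _
    refine ⟨q, ?_, ?_, hq⟩
    · intro j hj
      rfl
    · intro j hj
      exact absurd j.isLt (by omega)
  | succ m hm IH =>
    intro hm2
    obtain ⟨f, h1, h2, h3⟩ := IH (by omega)
    -- find a standard basis vector outside the span
    have hmn : m < n := by omega
    have hex : ∃ i : Fin n, Pi.basisFun ℚ (Fin n) i ∉
        Submodule.span ℚ (Set.range fun j => iQ n (f j)) := by
      by_contra hcon
      push_neg at hcon
      have htop : Submodule.span ℚ (Set.range fun j => iQ n (f j)) = ⊤ := by
        rw [eq_top_iff, ← (Pi.basisFun ℚ (Fin n)).span_eq, Submodule.span_le]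
        rintro x ⟨i, rfl⟩
        exact hcon i
      have hb : Module.Basis (Fin m) ℚ (Fin n → ℚ) := Module.Basis.mk h3 (by rw [htop])
      have := Module.finrank_eq_card_basis hb
      rw [Module.finrank_pi] at this
      simp at this
      omega
    obtain ⟨i, hi⟩ := hex
    refine ⟨Fin.snoc f (stdZ n i), ?_, ?_, ?_⟩
    · rintro ⟨jv, hjlt⟩ hj
      have hj' : jv < n - d := hj
      have hjm : jv < m := by omega
      have hje : (⟨jv, hjlt⟩ : Fin (m+1)) = Fin.castSucc ⟨jv, hjm⟩ := Fin.ext rfl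
      show (Fin.snoc f (stdZ n i) : Fin (m+1) → Fin n → ℤ) ⟨jv, hjlt⟩ = q ⟨jv, hj'⟩
      rw [hje, Fin.snoc_castSucc]
      exact h1 _ hj'
    · rintro ⟨jv, hjlt⟩ hj
      by_cases hjm : jv < m
      · have hje : (⟨jv, hjlt⟩ : Fin (m+1)) = Fin.castSucc ⟨jv, hjm⟩ := Fin.ext rfl
        rw [hje, Fin.snoc_castSucc]
        exact h2 _ hj
      · have hje : (⟨jv, hjlt⟩ : Fin (m+1)) = Fin.last m := Fin.ext (by simp [Fin.val_last]; omega)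
        rw [hje, Fin.snoc_last]
        exact ⟨i, rfl⟩
    · have he := Fin.comp_snoc (⇑(iQ n)) f (stdZ n i)
      have he2 : LinearIndependent ℚ (⇑(iQ n) ∘ Fin.snoc f (stdZ n i)) := by
        rw [he, linearIndependent_fin_snoc]
        exact ⟨h3, by rw [iQ_stdZ]; exact hi⟩
      exact he2

lemma exists_qt (n : ℕ) (ext : Fin n → Fin n → ℤ) (B : Module.Basis (Fin n) ℚ (Fin n → ℚ))
    (hB : ∀ j, B j = iQ n (ext j)) :
    ∀ k, k ≤ n → ∃ qt : Fin n → Fin n → ℤ,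
      (∀ i : Fin n, (i : ℕ) < k → ∀ j : Fin n, (i : ℕ) < (j : ℕ) → B.repr (iQ n (qt i)) j = 0) ∧
      (∀ i : Fin n, (i : ℕ) < k → ∀ j : Fin n, 0 ≤ B.repr (iQ n (qt i)) j) ∧
      (∀ i : Fin n, (i : ℕ) < k → 0 < B.repr (iQ n (qt i)) i) ∧
      (∀ m, m ≤ k → ∀ x : Fin n → ℤ, (∀ j : Fin n, m ≤ (j : ℕ) → B.repr (iQ n x) j = 0) →
        ∃ c : Fin n → ℤ, (∀ i : Fin n, m ≤ (i : ℕ) → c i = 0) ∧ x = ∑ i, c i • qt i) := by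
  classical
  have hadd : ∀ (x y : Fin n → ℤ) (j : Fin n),
      B.repr (iQ n (x + y)) j = B.repr (iQ n x) j + B.repr (iQ n y) j := by
    intro x y j; rw [map_add, map_add, Finsupp.add_apply]
  have hsub : ∀ (x y : Fin n → ℤ) (j : Fin n),
      B.repr (iQ n (x - y)) j = B.repr (iQ n x) j - B.repr (iQ n y) j := by
    intro x y j; rw [map_sub, map_sub, Finsupp.sub_apply]
  have hsmul : ∀ (c : ℤ) (x : Fin n → ℤ) (j : Fin n),
      B.repr (iQ n (c • x)) j = (c : ℚ) * B.repr (iQ n x) j := by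
    intro c x j
    rw [map_zsmul, map_zsmul, Finsupp.smul_apply, zsmul_eq_mul]
  have hsum : ∀ (s : Finset (Fin n)) (f : Fin n → Fin n → ℤ) (j : Fin n),
      B.repr (iQ n (∑ i ∈ s, f i)) j = ∑ i ∈ s, B.repr (iQ n (f i)) j := by
    intro s f j
    rw [map_sum, map_sum, Finsupp.finset_sum_apply]
  intro k
  induction k with
  | zero =>
    intro _
    refine ⟨fun _ => 0, by omega, by omega, by omega, ?_⟩
    intro m hm x hx
    have hm0 : m = 0 := by omega
    subst hm0
    have hx0 : B.repr (iQ n x) = 0 := by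
      ext j; exact hx j (Nat.zero_le _)
    have : iQ n x = 0 := by
      have := B.repr.map_eq_zero_iff.1 hx0
      exact this
    have hx0' : x = 0 := iQ_inj (by rw [this, map_zero])
    exact ⟨0, fun _ _ => rfl, by simp [hx0']⟩
  | succ k IH =>
    intro hk1
    obtain ⟨qt, H1, H2, H3, H4⟩ := IH (by omega)
    set K : Fin n := ⟨k, by omega⟩ with hKdef
    have hKval : (K : ℕ) = k := rfl
    -- the value functional at K and its denominators
    set a : Fin n → ℚ := fun l => B.repr (iQ n (stdZ n l)) K with ha
    set D : ℤ := ∏ l, ((a l).den : ℤ) with hD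
    have hDpos : 0 < D := Finset.prod_pos (fun l _ => by exact_mod_cast (a l).pos)
    have hrepr : ∀ x : Fin n → ℤ, B.repr (iQ n x) K = ∑ l, (x l : ℚ) * a l := by
      intro x
      have hxdec : iQ n x = ∑ l, (x l : ℤ) • iQ n (stdZ n l) := by
        funext j
        rw [Finset.sum_apply]
        show ((x j : ℚ)) = _
        simp only [Pi.smul_apply, zsmul_eq_mul, iQ_apply, stdZ]
        push_cast
        simp [mul_ite]
      rw [hxdec, map_sum, Finsupp.finset_sum_apply]
      refine Finset.sum_congr rfl fun l _ => ?_
      rw [map_zsmul, Finsupp.smul_apply, zsmul_eq_mul]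
    -- integrality of values times D
    have haD : ∀ l : Fin n, ∃ ml : ℤ, a l * (D : ℚ) = (ml : ℚ) := by
      intro l
      refine ⟨(a l).num * ∏ l' ∈ Finset.univ.erase l, ((a l').den : ℤ), ?_⟩
      have h1 : (D : ℚ) = ((a l).den : ℚ) *
          ((∏ l' ∈ Finset.univ.erase l, ((a l').den : ℤ) : ℤ) : ℚ) := by
        rw [show D = ((a l).den : ℤ) * ∏ l' ∈ Finset.univ.erase l, ((a l').den : ℤ) from
          (Finset.mul_prod_erase _ _ (Finset.mem_univ l)).symm]
        push_cast
        ring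
      rw [h1, ← mul_assoc, Rat.mul_den_eq_num]
      push_cast
      ring
    choose ml hml using haD
    have hDint : ∀ x : Fin n → ℤ, ∃ mz : ℤ, B.repr (iQ n x) K * (D : ℚ) = (mz : ℚ) := by
      intro x
      refine ⟨∑ l, x l * ml l, ?_⟩
      rw [hrepr x, Finset.sum_mul]
      push_cast
      refine Finset.sum_congr rfl fun l _ => ?_
      rw [mul_assoc, hml l]
    -- the ideal of achievable values times D
    set Lam : ℕ → (Fin n → ℤ) → Prop :=
      fun m x => ∀ j : Fin n, m ≤ (j : ℕ) → B.repr (iQ n x) j = 0 with hLam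
    set H : Submodule ℤ ℤ :=
      { carrier := {mz : ℤ | ∃ x, Lam (k+1) x ∧ B.repr (iQ n x) K * (D : ℚ) = (mz : ℚ)}
        add_mem' := by
          rintro m1 m2 ⟨x, hx, hxe⟩ ⟨y, hy, hye⟩
          refine ⟨x + y, fun j hj => by rw [hadd, hx j hj, hy j hj, add_zero], ?_⟩
          rw [hadd, add_mul, hxe, hye]
          push_cast
          ring
        zero_mem' := by
          refine ⟨0, fun j hj => by simp, by simp⟩
        smul_mem' := by
          rintro c m ⟨x, hx, hxe⟩
          refine ⟨c • x, fun j hj => by rw [hsmul, hx j hj, mul_zero], ?_⟩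
          rw [hsmul, mul_assoc, hxe, smul_eq_mul]
          push_cast
          ring } with hH
    have hmemH : ∀ mz : ℤ, mz ∈ H ↔
        ∃ x, Lam (k+1) x ∧ B.repr (iQ n x) K * (D : ℚ) = (mz : ℚ) := fun _ => Iff.rfl
    obtain ⟨g, hg⟩ := (IsPrincipalIdealRing.principal H).principal
    -- D belongs to H via ext K
    have hreprExtK : ∀ j : Fin n, B.repr (iQ n (ext K)) j = if j = K then 1 else 0 := by
      intro j
      rw [← hB K, Module.Basis.repr_self]
      rw [Finsupp.single_apply]
      by_cases h : j = K
      · simp [h]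
      · simp [h, Ne.symm h]
    have hDH : D ∈ H := by
      refine (hmemH D).2 ⟨ext K, fun j hj => ?_, ?_⟩
      · rw [hreprExtK j]
        have hne : j ≠ K := by
          intro hjK
          rw [hjK, hKval] at hj
          omega
        rw [if_neg hne]
      · rw [hreprExtK K, if_pos rfl, one_mul]
    have hgne : g ≠ 0 := by
      intro hg0
      rw [hg0] at hg
      have hD0 := hg ▸ hDH
      rw [Submodule.mem_span_singleton] at hD0
      obtain ⟨cc, hcc⟩ := hD0
      rw [smul_zero] at hcc
      omega
    have hgH : g ∈ H := by
      rw [hg]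
      exact Submodule.mem_span_singleton_self g
    obtain ⟨b0, hb0L, hb0e⟩ := (hmemH g).1 hgH
    have hDQ : (D : ℚ) ≠ 0 := by
      exact_mod_cast hDpos.ne'
    have hvalb0 : B.repr (iQ n b0) K ≠ 0 := by
      intro h0
      rw [h0, zero_mul] at hb0e
      exact hgne (by exact_mod_cast hb0e.symm)
    have hgen0 : ∀ x, Lam (k+1) x → ∃ c : ℤ,
        B.repr (iQ n x) K = c * B.repr (iQ n b0) K := by
      intro x hx
      obtain ⟨mz, hmz⟩ := hDint x
      have hmzH : mz ∈ H := (hmemH mz).2 ⟨x, hx, hmz⟩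
      rw [hg, Submodule.mem_span_singleton] at hmzH
      obtain ⟨c, hc⟩ := hmzH
      refine ⟨c, ?_⟩
      have heq : B.repr (iQ n x) K * (D : ℚ) = ((c : ℚ) * B.repr (iQ n b0) K) * (D : ℚ) := by
        rw [hmz, ← hc, smul_eq_mul]
        push_cast
        rw [mul_assoc, hb0e]
      exact mul_right_cancel₀ hDQ heq
    obtain ⟨b, hbL, hbpos, hbgen⟩ : ∃ b, Lam (k+1) b ∧ 0 < B.repr (iQ n b) K ∧
        ∀ x, Lam (k+1) x → ∃ c : ℤ, B.repr (iQ n x) K = c * B.repr (iQ n b) K := by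
      have hnegr : ∀ (x : Fin n → ℤ) (j : Fin n),
          B.repr (iQ n (-x)) j = - B.repr (iQ n x) j := by
        intro x j; rw [map_neg, map_neg, Finsupp.neg_apply]
      rcases hvalb0.lt_or_gt with hneg | hpos
      · refine ⟨-b0, fun j hj => by rw [hnegr, hb0L j hj, neg_zero], ?_, ?_⟩
        · rw [hnegr]; linarith
        · intro x hx
          obtain ⟨c, hc⟩ := hgen0 x hx
          exact ⟨-c, by rw [hnegr]; push_cast; rw [hc]; ring⟩
      · exact ⟨b0, hb0L, hpos, hgen0⟩
    -- the positive vector p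
    set p : Fin n → ℤ := ∑ i ∈ Finset.univ.filter (fun i : Fin n => (i : ℕ) < k), qt i with hp
    have hpj : ∀ j : Fin n, B.repr (iQ n p) j =
        ∑ i ∈ Finset.univ.filter (fun i : Fin n => (i : ℕ) < k), B.repr (iQ n (qt i)) j :=
      fun j => hsum _ _ j
    have hpzero : ∀ j : Fin n, k ≤ (j : ℕ) → B.repr (iQ n p) j = 0 := by
      intro j hj
      rw [hpj]
      refine Finset.sum_eq_zero fun i hi => ?_
      rw [Finset.mem_filter] at hi
      exact H1 i hi.2 j (by omega)
    have hppos : ∀ j : Fin n, (j : ℕ) < k → 0 < B.repr (iQ n p) j := by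
      intro j hj
      rw [hpj]
      refine Finset.sum_pos' (fun i hi => ?_) ⟨j, ?_, ?_⟩
      · rw [Finset.mem_filter] at hi
        exact H2 i hi.2 j
      · rw [Finset.mem_filter]; exact ⟨Finset.mem_univ j, hj⟩
      · exact H3 j hj
    -- the shift multiplier
    set r : Fin n → ℤ := fun j => ⌈ - B.repr (iQ n b) j / B.repr (iQ n p) j ⌉ with hr
    set mm : ℤ := ((Finset.univ.sup fun j : Fin n => (max 0 (r j)).toNat : ℕ) : ℤ) with hmm
    have hmm0 : (0 : ℤ) ≤ mm := by positivity
    have hmmr : ∀ j : Fin n, r j ≤ mm := by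
      intro j
      have h1 : r j ≤ max 0 (r j) := le_max_right _ _
      have h2 : max 0 (r j) = ((max 0 (r j)).toNat : ℤ) :=
        (Int.toNat_of_nonneg (le_max_left _ _)).symm
      have h3 : ((max 0 (r j)).toNat : ℤ) ≤ mm := by
        rw [hmm]
        exact_mod_cast Finset.le_sup (f := fun j : Fin n => (max 0 (r j)).toNat) (Finset.mem_univ j)
      omega
    -- the new vector
    set w : Fin n → ℤ := b + mm • p with hw
    have hwj : ∀ j : Fin n, B.repr (iQ n w) j =
        B.repr (iQ n b) j + (mm : ℚ) * B.repr (iQ n p) j := by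
      intro j; rw [hw, hadd, hsmul]
    have hwlow : ∀ j : Fin n, (j : ℕ) < k → 0 ≤ B.repr (iQ n w) j := by
      intro j hj
      rw [hwj]
      have hpj' := hppos j hj
      have h1 : (- B.repr (iQ n b) j / B.repr (iQ n p) j) ≤ (mm : ℚ) := by
        calc (- B.repr (iQ n b) j / B.repr (iQ n p) j) ≤ ((r j : ℤ) : ℚ) := Int.le_ceil _
        _ ≤ (mm : ℚ) := by exact_mod_cast hmmr j
      rw [div_le_iff₀ hpj'] at h1
      nlinarith
    have hwK : B.repr (iQ n w) K = B.repr (iQ n b) K := by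
      rw [hwj, hpzero K (by omega), mul_zero, add_zero]
    have hwhigh : ∀ j : Fin n, k + 1 ≤ (j : ℕ) → B.repr (iQ n w) j = 0 := by
      intro j hj
      rw [hwj, hbL j hj, hpzero j (by omega), mul_zero, add_zero]
    -- assemble
    set qt2 : Fin n → Fin n → ℤ := fun i => if (i : ℕ) = k then w else qt i with hqt2
    have hqt2k : ∀ i : Fin n, (i : ℕ) = k → qt2 i = w := by
      intro i hi; rw [hqt2]; simp only [hi, if_pos]
    have hqt2n : ∀ i : Fin n, (i : ℕ) ≠ k → qt2 i = qt i := by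
      intro i hi; rw [hqt2]; simp only [hi, if_neg, ite_false]
    refine ⟨qt2, ?_, ?_, ?_, ?_⟩
    · intro i hik j hij
      by_cases hik' : (i : ℕ) = k
      · rw [hqt2k i hik']
        exact hwhigh j (by omega)
      · rw [hqt2n i hik']
        exact H1 i (by omega) j hij
    · intro i hik j
      by_cases hik' : (i : ℕ) = k
      · rw [hqt2k i hik']
        rcases lt_trichotomy ((j : ℕ)) k with h | h | h
        · exact hwlow j h
        · have hjK : j = K := Fin.ext (by omega)
          rw [hjK, hwK]
          exact le_of_lt hbpos
        · rw [hwhigh j (by omega)]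
      · rw [hqt2n i hik']
        exact H2 i (by omega) j
    · intro i hik
      by_cases hik' : (i : ℕ) = k
      · have hiK : i = K := Fin.ext (by omega)
        rw [hqt2k i hik', hiK, hwK]
        exact hbpos
      · rw [hqt2n i hik']
        exact H3 i (by omega)
    · intro m hm x hx
      by_cases hmk : m ≤ k
      · obtain ⟨c, hc0, hcs⟩ := H4 m hmk x hx
        refine ⟨c, hc0, ?_⟩
        rw [hcs]
        refine Finset.sum_congr rfl fun i _ => ?_
        by_cases hik' : (i : ℕ) = k
        · rw [hc0 i (by omega), zero_smul, zero_smul]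
        · rw [hqt2n i hik']
      · have hmk1 : m = k + 1 := by omega
        subst hmk1
        obtain ⟨c, hcval⟩ := hbgen x hx
        set y : Fin n → ℤ := x - c • w with hy
        have hyL : Lam k y := by
          intro j hj
          rw [hy, hsub, hsmul]
          rcases eq_or_lt_of_le hj with h | h
          · have hjK : j = K := Fin.ext (by omega)
            rw [hjK, hwK, ← hcval]
            ring
          · rw [hx j (by omega), hwhigh j (by omega), mul_zero, sub_zero]
        obtain ⟨c', hc'0, hc's⟩ := H4 k le_rfl y hyL
        set cnew : Fin n → ℤ := fun i => if (i : ℕ) = k then c else c' i with hcnew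
        refine ⟨cnew, ?_, ?_⟩
        · intro i hi
          rw [hcnew]
          simp only [if_neg (show ¬ ((i:ℕ) = k) by omega)]
          exact hc'0 i (by omega)
        · have key : ∀ i : Fin n,
              cnew i • qt2 i = c' i • qt i + (if i = K then c • w else 0) := by
            intro i
            by_cases hik' : (i : ℕ) = k
            · have hiK : i = K := Fin.ext (by omega)
              rw [hqt2k i hik', hcnew]
              simp only [if_pos hik']
              rw [if_pos hiK, hc'0 i (by omega), zero_smul, zero_add]
            · have hiK : i ≠ K := by
                intro h
                rw [h] at hik'
                exact hik' hKval
              rw [hqt2n i hik', hcnew]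
              simp only [if_neg hik']
              rw [if_neg hiK, add_zero]
          calc x = y + c • w := by rw [hy]; ring
          _ = (∑ i, c' i • qt i) + c • w := by rw [← hc's]
          _ = ∑ i, (c' i • qt i + (if i = K then c • w else 0)) := by
              rw [Finset.sum_add_distrib]
              congr 1
              rw [Finset.sum_ite_eq' Finset.univ K (fun _ => c • w)]
              simp
          _ = ∑ i, cnew i • qt2 i := by
              refine Finset.sum_congr rfl fun i _ => (key i).symm

end IntegerLemmaAux



open IntegerLemmaAux in
/-- Lemma on completing a family of integer vectors nonnegative on `S` to a
unimodular basis nonnegative on `S`.  Given linearly independent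
`q¹, …, q^{n−d} ∈ ℤⁿ` with `⟨q^j, κ⟩ ≥ 0` for all `κ ∈ S ⊆ ℤ₊ⁿ`, there are an
extension `ext` of the family by standard basis vectors which is linearly
independent, and vectors `q̃¹, …, q̃ⁿ ∈ ℤⁿ` such that (1) the spans of the first `k`
of the `q̃`'s and of the `ext`'s agree for every `k ≤ n`; (2) `⟨q̃^j, κ⟩ ≥ 0` on `S`;
(3) the convex hull of `{0, q̃¹, …, q̃ⁿ}` contains no other lattice points; and
(4) `|det(q̃¹, …, q̃ⁿ)| = 1`. -/
theorem integer_lemma (n d : ℕ) (hd : d ≤ n) (q : Fin (n - d) → (Fin n → ℤ))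
    (hq : LinearIndependent ℤ q) (S : Set (Fin n → ℕ))
    (hS : ∀ κ ∈ S, ∀ j, 0 ≤ ∑ l, q j l * (κ l : ℤ)) :
    ∃ ext qt : Fin n → (Fin n → ℤ),
      (∀ (j : Fin n) (hj : (j : ℕ) < n - d), ext j = q ⟨(j : ℕ), hj⟩) ∧
      (∀ j : Fin n, n - d ≤ (j : ℕ) →
        ∃ i : Fin n, ext j = fun l => if l = i then 1 else 0) ∧
      LinearIndependent ℤ ext ∧
      (∀ k : ℕ, k ≤ n →
        Submodule.span ℝ (zToR '' (qt '' {j : Fin n | (j : ℕ) < k}))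
          = Submodule.span ℝ (zToR '' (ext '' {j : Fin n | (j : ℕ) < k}))) ∧
      (∀ κ ∈ S, ∀ j : Fin n, 0 ≤ ∑ l, qt j l * (κ l : ℤ)) ∧
      (convexHull ℝ (insert (0 : Fin n → ℝ) (Set.range fun j => zToR (qt j)))
          ∩ {v : Fin n → ℝ | ∀ l, ∃ m : ℤ, v l = (m : ℝ)}
        = insert (0 : Fin n → ℝ) (Set.range fun j => zToR (qt j))) ∧
      |(Matrix.of fun i j => qt j i).det| = 1 := by
  classical
  obtain ⟨ext, hext1, hext2, hextLIQ⟩ := exists_ext n d q (li_rat hq)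
  have hextLI : LinearIndependent ℤ ext := li_int hextLIQ
  have htop : Submodule.span ℚ (Set.range fun j => iQ n (ext j)) = ⊤ := by
    refine hextLIQ.span_eq_top_of_card_eq_finrank' ?_
    rw [Module.finrank_pi]
  set B : Module.Basis (Fin n) ℚ (Fin n → ℚ) := Module.Basis.mk hextLIQ (le_of_eq htop.symm) with hBdef
  have hB : ∀ j, B j = iQ n (ext j) := fun j => Module.Basis.mk_apply _ _ j
  obtain ⟨qt, T1, T2, T3, T4⟩ := exists_qt n ext B hB n le_rfl
  have hfull : ∀ x : Fin n → ℤ, ∃ c : Fin n → ℤ, x = ∑ i, c i • qt i := by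
    intro x
    obtain ⟨c, _, hc⟩ := T4 n le_rfl x (fun j hj => absurd j.isLt (by omega))
    exact ⟨c, hc⟩
  -- determinant
  have hdet : ∃ C : Matrix (Fin n) (Fin n) ℤ, (Matrix.of fun i j => qt j i) * C = 1 := by
    choose c hc using fun i : Fin n => hfull (stdZ n i)
    refine ⟨Matrix.of (fun j i => c i j), ?_⟩
    ext l i
    rw [Matrix.mul_apply]
    have h1 := congrFun (hc i) l
    rw [Finset.sum_apply] at h1
    simp only [Pi.smul_apply, smul_eq_mul] at h1
    rw [Matrix.one_apply]
    rw [show (if l = i then (1:ℤ) else 0) = stdZ n i l from rfl, h1]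
    exact Finset.sum_congr rfl fun j _ => by
      simp only [Matrix.of_apply]
      ring
  obtain ⟨C, hC⟩ := hdet
  have hunit : IsUnit (Matrix.of fun i j => qt j i).det := by
    have h2 := congrArg Matrix.det hC
    rw [Matrix.det_mul, Matrix.det_one] at h2
    exact IsUnit.of_mul_eq_one _ h2
  have habs : |(Matrix.of fun i j => qt j i).det| = 1 := by
    rcases Int.isUnit_iff.1 hunit with h | h <;> rw [h] <;> norm_num
  -- real linear independence
  set MR : Matrix (Fin n) (Fin n) ℝ := Matrix.of (fun i j => ((qt j i : ℤ) : ℝ)) with hMR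
  have hdetR : MR.det ≠ 0 := by
    have h1 : MR = (Int.castRingHom ℝ).mapMatrix (Matrix.of fun i j => qt j i) := by
      ext i j
      simp [hMR]
    rw [h1, ← RingHom.map_det]
    rcases Int.isUnit_iff.1 hunit with h | h <;> rw [h] <;> norm_num
  have hLIR : LinearIndependent ℝ (fun j => zToR (qt j)) := by
    rw [Fintype.linearIndependent_iff]
    intro g hg i
    have hmv : MR.mulVec g = 0 := by
      funext l
      have h2 := congrFun hg l
      rw [Finset.sum_apply] at h2
      simp only [Pi.smul_apply, smul_eq_mul, Pi.zero_apply] at h2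
      simp only [Matrix.mulVec, dotProduct, hMR, Matrix.of_apply, Pi.zero_apply]
      rw [← h2]
      exact Finset.sum_congr rfl fun j _ => by unfold zToR; ring
    exact congrFun (Matrix.eq_zero_of_mulVec_eq_zero hdetR hmv) i
  -- casting helpers
  have hqsmul : ∀ (a : ℚ) (x : Fin n → ℝ), a • x = (a : ℝ) • x := by
    intro a x
    funext l
    simp [Rat.smul_def]
  have hzsum : ∀ (c : Fin n → ℤ) (v : Fin n → Fin n → ℤ),
      zToR (∑ i, c i • v i) = ∑ i, (c i : ℝ) • zToR (v i) := by
    intro c v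
    rw [← qR_iQ, map_sum, map_sum]
    refine Finset.sum_congr rfl fun i _ => ?_
    rw [map_zsmul, map_zsmul, qR_iQ, Int.cast_smul_eq_zsmul ℝ]
  have hqtdec : ∀ i : Fin n, iQ n (qt i) = ∑ j', B.repr (iQ n (qt i)) j' • iQ n (ext j') := by
    intro i
    conv_lhs => rw [← B.sum_repr (iQ n (qt i))]
    exact Finset.sum_congr rfl fun j' _ => by rw [hB j']
  have hzdec : ∀ i : Fin n, zToR (qt i) = ∑ j', ((B.repr (iQ n (qt i)) j' : ℚ) : ℝ) • zToR (ext j') := by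
    intro i
    conv_lhs => rw [← qR_iQ (qt i), hqtdec i]
    rw [map_sum]
    refine Finset.sum_congr rfl fun j' _ => ?_
    rw [map_smul, qR_iQ, hqsmul]
  -- span equality
  have hspan : ∀ k : ℕ, k ≤ n →
      Submodule.span ℝ (zToR '' (qt '' {j : Fin n | (j : ℕ) < k}))
        = Submodule.span ℝ (zToR '' (ext '' {j : Fin n | (j : ℕ) < k})) := by
    intro k hk
    apply le_antisymm
    · rw [Submodule.span_le]
      rintro x ⟨v, ⟨i, hi, rfl⟩, rfl⟩
      rw [SetLike.mem_coe, hzdec i]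
      refine Submodule.sum_mem _ fun j' _ => ?_
      by_cases hj' : (j' : ℕ) < k
      · exact Submodule.smul_mem _ _
          (Submodule.subset_span ⟨ext j', ⟨j', hj', rfl⟩, rfl⟩)
      · rw [T1 i i.isLt j' (by simp only [Set.mem_setOf_eq] at hi; omega)]
        simp
    · rw [Submodule.span_le]
      rintro x ⟨v, ⟨j, hj, rfl⟩, rfl⟩
      simp only [Set.mem_setOf_eq] at hj
      have hrep0 : ∀ j' : Fin n, (j : ℕ) + 1 ≤ (j' : ℕ) → B.repr (iQ n (ext j)) j' = 0 := by
        intro j' hj'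
        rw [← hB j, Module.Basis.repr_self, Finsupp.single_apply]
        rw [if_neg (show ¬ j = j' by intro hjj'; rw [hjj'] at hj'; omega)]
      obtain ⟨c, hc0, hcs⟩ := T4 ((j : ℕ) + 1) (by omega) (ext j) hrep0
      rw [SetLike.mem_coe, hcs, hzsum]
      refine Submodule.sum_mem _ fun i _ => ?_
      by_cases hi : (i : ℕ) < k
      · exact Submodule.smul_mem _ _
          (Submodule.subset_span ⟨qt i, ⟨i, hi, rfl⟩, rfl⟩)
      · rw [hc0 i (by omega)]
        simp
  -- nonnegativity on S
  have hSext : ∀ κ ∈ S, ∀ i : Fin n, 0 ≤ ∑ l, ext i l * (κ l : ℤ) := by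
    intro κ hκ i
    by_cases hi : (i : ℕ) < n - d
    · rw [hext1 i hi]
      exact hS κ hκ _
    · obtain ⟨i', hi'⟩ := hext2 i (by omega)
      rw [hi']
      have h2 : (∑ l, (if l = i' then (1:ℤ) else 0) * (κ l : ℤ)) = (κ i' : ℤ) := by
        rw [Finset.sum_eq_single i']
        · simp
        · intro l _ hne
          simp [hne]
        · intro h
          exact absurd (Finset.mem_univ i') h
      show (0:ℤ) ≤ ∑ l, (if l = i' then (1:ℤ) else 0) * (κ l : ℤ)
      rw [h2]
      exact Int.natCast_nonneg _
  have hSqt : ∀ κ ∈ S, ∀ j : Fin n, 0 ≤ ∑ l, qt j l * (κ l : ℤ) := by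
    intro κ hκ j
    set κlin : (Fin n → ℚ) →ₗ[ℚ] ℚ :=
      { toFun := fun v => ∑ l, v l * (κ l : ℚ)
        map_add' := by
          intro v w
          simp only [Pi.add_apply, add_mul]
          rw [Finset.sum_add_distrib]
        map_smul' := by
          intro a v
          simp only [Pi.smul_apply, smul_eq_mul, RingHom.id_apply]
          rw [Finset.mul_sum]
          exact Finset.sum_congr rfl fun l _ => by ring } with hκlin
    have hκext : ∀ i : Fin n, κlin (iQ n (ext i)) = ((∑ l, ext i l * (κ l : ℤ) : ℤ) : ℚ) := by
      intro i
      rw [hκlin]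
      simp only [LinearMap.coe_mk, AddHom.coe_mk]
      push_cast
      exact Finset.sum_congr rfl fun l _ => by rw [iQ_apply]
    have hκqt : κlin (iQ n (qt j)) = ((∑ l, qt j l * (κ l : ℤ) : ℤ) : ℚ) := by
      rw [hκlin]
      simp only [LinearMap.coe_mk, AddHom.coe_mk]
      push_cast
      exact Finset.sum_congr rfl fun l _ => by rw [iQ_apply]
    have hnn : 0 ≤ κlin (iQ n (qt j)) := by
      rw [hqtdec j, map_sum]
      refine Finset.sum_nonneg fun i _ => ?_
      rw [map_smul, smul_eq_mul]
      refine mul_nonneg (T2 j j.isLt i) ?_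
      rw [hκext i]
      exact_mod_cast hSext κ hκ i
    rw [hκqt] at hnn
    exact_mod_cast hnn
  -- convex hull
  have hhull : convexHull ℝ (insert (0 : Fin n → ℝ) (Set.range fun j => zToR (qt j)))
      ∩ {v : Fin n → ℝ | ∀ l, ∃ m : ℤ, v l = (m : ℝ)}
      = insert (0 : Fin n → ℝ) (Set.range fun j => zToR (qt j)) := by
    apply Set.Subset.antisymm
    · rintro v ⟨hvc, hvl⟩
      rw [mem_convexHull_iff_exists_fintype] at hvc
      obtain ⟨ι, _, wt, z, hw0, hw1, hzA, hsumv⟩ := hvc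
      set t : Fin n → ℝ :=
        fun j => ∑ i ∈ Finset.univ.filter (fun i => z i = zToR (qt j)), wt i with ht
      have hqinj : Function.Injective (fun j => zToR (qt j)) := hLIR.injective
      have ht0 : ∀ j, 0 ≤ t j := fun j => Finset.sum_nonneg fun i _ => hw0 i
      have hinner : ∀ i : ι,
          (∑ j, if z i = zToR (qt j) then wt i else 0) ≤ wt i := by
        intro i
        by_cases hex : ∃ j0, z i = zToR (qt j0)
        · obtain ⟨j0, hj0⟩ := hex
          rw [Finset.sum_eq_single j0]
          · rw [if_pos hj0]
          · intro j _ hjne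
            refine if_neg fun hcon => hjne (hqinj ?_)
            show zToR (qt j) = zToR (qt j0)
            rw [← hcon]
            exact hj0
          · intro hmem
            exact absurd (Finset.mem_univ j0) hmem
        · rw [Finset.sum_eq_zero fun j _ => if_neg (fun hc => hex ⟨j, hc⟩)]
          exact hw0 i
      have htsum : ∑ j, t j ≤ 1 := by
        rw [ht]
        have h1 : ∀ j : Fin n, (∑ i ∈ Finset.univ.filter (fun i => z i = zToR (qt j)), wt i)
            = ∑ i, if z i = zToR (qt j) then wt i else 0 :=
          fun j => (Finset.sum_filter _ _)
        calc (∑ j, ∑ i ∈ Finset.univ.filter (fun i => z i = zToR (qt j)), wt i)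
            = ∑ j, ∑ i, if z i = zToR (qt j) then wt i else 0 :=
              Finset.sum_congr rfl fun j _ => h1 j
          _ = ∑ i, ∑ j, if z i = zToR (qt j) then wt i else 0 := Finset.sum_comm
          _ ≤ ∑ i, wt i := Finset.sum_le_sum fun i _ => hinner i
          _ = 1 := hw1
      have hrep : ∑ j, t j • zToR (qt j) = v := by
        rw [← hsumv, ht]
        have h1 : ∀ j : Fin n,
            (∑ i ∈ Finset.univ.filter (fun i => z i = zToR (qt j)), wt i) • zToR (qt j)
            = ∑ i, if z i = zToR (qt j) then wt i • z i else 0 := by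
          intro j
          rw [Finset.sum_filter, Finset.sum_smul]
          refine Finset.sum_congr rfl fun i _ => ?_
          by_cases hc : z i = zToR (qt j)
          · rw [if_pos hc, if_pos hc, hc]
          · rw [if_neg hc, if_neg hc, zero_smul]
        calc (∑ j, (∑ i ∈ Finset.univ.filter (fun i => z i = zToR (qt j)), wt i) • zToR (qt j))
            = ∑ j, ∑ i, if z i = zToR (qt j) then wt i • z i else 0 :=
              Finset.sum_congr rfl fun j _ => h1 j
          _ = ∑ i, ∑ j, if z i = zToR (qt j) then wt i • z i else 0 := Finset.sum_comm
          _ = ∑ i, wt i • z i := by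
              refine Finset.sum_congr rfl fun i _ => ?_
              by_cases hex : ∃ j0, z i = zToR (qt j0)
              · obtain ⟨j0, hj0⟩ := hex
                rw [Finset.sum_eq_single j0]
                · rw [if_pos hj0]
                · intro j _ hjne
                  refine if_neg fun hcon => hjne (hqinj ?_)
                  show zToR (qt j) = zToR (qt j0)
                  rw [← hcon]
                  exact hj0
                · intro hmem
                  exact absurd (Finset.mem_univ j0) hmem
              · rw [Finset.sum_eq_zero fun j _ => if_neg (fun hc => hex ⟨j, hc⟩)]
                have hz0 : z i = 0 := by
                  rcases hzA i with h | h
                  · exact h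
                  · exact absurd h (by
                      intro hcon
                      obtain ⟨j, hj⟩ := hcon
                      exact hex ⟨j, hj.symm⟩)
                rw [hz0, smul_zero]
      -- integer coordinates
      choose u hu using hvl
      have huv : zToR u = v := by
        funext l
        exact (hu l).symm
      obtain ⟨c, hcu⟩ := hfull u
      have hvc2 : v = ∑ j, ((c j : ℤ) : ℝ) • zToR (qt j) := by
        rw [← huv, hcu, hzsum]
      have hceq : ∀ j, t j = ((c j : ℤ) : ℝ) := by
        have hg : ∑ j, (t j - ((c j : ℤ) : ℝ)) • zToR (qt j) = 0 := by
          have : ∑ j, (t j - ((c j : ℤ) : ℝ)) • zToR (qt j)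
              = (∑ j, t j • zToR (qt j)) - ∑ j, ((c j : ℤ) : ℝ) • zToR (qt j) := by
            rw [← Finset.sum_sub_distrib]
            exact Finset.sum_congr rfl fun j _ => by rw [sub_smul]
          rw [this, hrep, ← hvc2, sub_self]
        intro j
        have := (Fintype.linearIndependent_iff.1 hLIR) _ hg j
        linarith [this]
      have hc0 : ∀ j, 0 ≤ c j := by
        intro j
        have := ht0 j
        rw [hceq j] at this
        exact_mod_cast this
      have hcsum1 : ∑ j, c j ≤ 1 := by
        have h2 : (∑ j, ((c j : ℤ) : ℝ)) ≤ 1 := by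
          rw [show (∑ j, ((c j : ℤ) : ℝ)) = ∑ j, t j from
            Finset.sum_congr rfl fun j _ => (hceq j).symm]
          exact htsum
        exact_mod_cast h2
      by_cases hall : ∀ j, c j = 0
      · left
        rw [hvc2, Finset.sum_eq_zero fun j _ => by rw [hall j]; simp]
      · push_neg at hall
        obtain ⟨j0, hj0ne⟩ := hall
        have hj0one : c j0 = 1 := by
          have h0 := hc0 j0
          have h1 : 1 ≤ c j0 := by omega
          have h2 : c j0 ≤ ∑ j, c j :=
            Finset.single_le_sum (fun j _ => hc0 j) (Finset.mem_univ j0)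
          omega
        have herase : ∑ j ∈ Finset.univ.erase j0, c j = 0 := by
          have h3 : c j0 + ∑ j ∈ Finset.univ.erase j0, c j = ∑ j, c j :=
            Finset.add_sum_erase _ _ (Finset.mem_univ j0)
          have h4 : 0 ≤ ∑ j ∈ Finset.univ.erase j0, c j :=
            Finset.sum_nonneg fun j _ => hc0 j
          omega
        have hother : ∀ j, j ≠ j0 → c j = 0 := by
          intro j hj
          have := (Finset.sum_eq_zero_iff_of_nonneg
            (fun i (_ : i ∈ Finset.univ.erase j0) => hc0 i)).1 herase j
            (Finset.mem_erase.2 ⟨hj, Finset.mem_univ j⟩)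
          exact this
        right
        refine ⟨j0, ?_⟩
        rw [hvc2, Finset.sum_eq_single j0]
        · rw [hj0one]
          simp
        · intro j _ hjne
          rw [hother j hjne]
          simp
        · intro hmem
          exact absurd (Finset.mem_univ j0) hmem
    · intro x hx
      refine ⟨subset_convexHull ℝ _ hx, ?_⟩
      rcases hx with h | ⟨j, hj⟩
      · intro l
        refine ⟨0, ?_⟩
        rw [h]
        simp
      · intro l
        refine ⟨qt j l, ?_⟩
        rw [← hj]
        rfl
  exact ⟨ext, qt, hext1, fun j hj => hext2 j hj, hextLI, hspan, hSqt, hhull, habs⟩
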